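/- Let f = h + \overline{g} with h(z) = z + \sum_{n=2}^{\infty} a_n z^n and g(z) = \sum_{n=1}^{\infty} b_n z^n holomorphic on \mathbb{D}, satisfying \sum_{n=2}^{\infty} n|a_n| + \sum_{n=1}^{\infty} n|b_n| \leq 1/2. Let a > -1 and b > -1 be real numbers satisfying either (i) ab \leq 3, or (ii) ab > 3 and a^2 b^2 - 4ab - 2(a+b) \leq 1. Define A_n = [(a+1)(b+1)/((a+n)(b+n))] a_n (with A_1 = a_1 = 1) and B_n = [(a+1)(b+1)/((a+n)(b+n))] b_n for n \geq 1. Then \sum_{n=2}^{\infty} n(2n-1)(|A_n| + |B_n|) \leq 1 - |B_1|; consequently the harmonic function F(z) = \sum_{n=1}^{\infty} A_n z^n + \overline{\sum_{n=1}^{\infty} B_n z^n} is uniformly convex in \mathbb{D}. -/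

import Mathlib

open Complex Metric ComplexConjugate

noncomputable section

/-- The necessary and sufficient condition (due to Kanas–Ponnusamy–Sairam) for a
sense-preserving harmonic mapping `f = h + conj g` to be uniformly convex in the unit
disk: `Re P(z,ζ) ≥ 0` for all `z ≠ ζ` in `𝔻`.  We use it as our formal definition of
"uniformly convex in `𝔻`". -/
def UniformlyConvexOnDisk (h g : ℂ → ℂ) : Prop :=
  ∀ z ∈ ball (0:ℂ) 1, ∀ ζ ∈ ball (0:ℂ) 1, z ≠ ζ →
    0 ≤ (((z - ζ) * deriv h z + (z - ζ) ^ 2 * deriv (deriv h) z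
          + conj ((z - ζ) * deriv g z) + conj ((z - ζ) ^ 2 * deriv (deriv g) z))
        / ((z - ζ) * deriv h z - conj ((z - ζ) * deriv g z))).re

/-- The coefficient multipliers of the Bernardi-type transform `H_{a,b}`:
`(Bern a b c) n = ((a+1)(b+1)/((a+n)(b+n))) · c n`. -/
def bernCoeff (a b : ℝ) (c : ℕ → ℂ) : ℕ → ℂ :=
  fun n => (((a + 1) * (b + 1) / ((a + n) * (b + n)) : ℝ) : ℂ) * c n

namespace BernAux

lemma fac_pos {a b : ℝ} (ha : -1 < a) (hb : -1 < b) (n : ℕ) (hn : 1 ≤ n) :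
    0 < (a + n) * (b + n) := by
  have h1 : (1:ℝ) ≤ n := by exact_mod_cast hn
  nlinarith

lemma norm_bern {a b : ℝ} (c : ℕ → ℂ) (n : ℕ) :
    ‖bernCoeff a b c n‖ = |(a + 1) * (b + 1) / ((a + n) * (b + n))| * ‖c n‖ := by
  rw [bernCoeff, norm_mul, Complex.norm_real, Real.norm_eq_abs]

lemma norm_bern' {a b : ℝ} (ha : -1 < a) (hb : -1 < b) (c : ℕ → ℂ) (n : ℕ) (hn : 1 ≤ n) :
    ‖bernCoeff a b c n‖ = (a + 1) * (b + 1) / ((a + n) * (b + n)) * ‖c n‖ := by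
  rw [norm_bern, _root_.abs_of_nonneg (le_of_lt (div_pos (by nlinarith) (fac_pos ha hb n hn)))]

lemma norm_bern_le {a b : ℝ} (ha : -1 < a) (hb : -1 < b) (c : ℕ → ℂ) (n : ℕ) (hn : 1 ≤ n) :
    ‖bernCoeff a b c n‖ ≤ ‖c n‖ := by
  have h1 : (1:ℝ) ≤ n := by exact_mod_cast hn
  have hp := fac_pos ha hb n hn
  rw [norm_bern' ha hb c n hn]
  have hfac : (a + 1) * (b + 1) / ((a + n) * (b + n)) ≤ 1 := by
    rw [div_le_one hp]; nlinarith
  nlinarith [norm_nonneg (c n)]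

lemma key_coeff {a b : ℝ} (ha : -1 < a) (hb : -1 < b)
    (hab : a * b ≤ 3 ∨ (3 < a * b ∧ a ^ 2 * b ^ 2 - 4 * (a * b) - 2 * (a + b) ≤ 1))
    (c : ℕ → ℂ) (n : ℕ) (hn : 2 ≤ n) :
    ((n:ℝ) * (2 * n - 1)) * ‖bernCoeff a b c n‖ ≤ 2 * n * ‖c n‖ := by
  have h2 : (2:ℝ) ≤ n := by exact_mod_cast hn
  have hn1 : 1 ≤ n := le_trans one_le_two hn
  have hp := fac_pos ha hb n hn1
  have hkey : (2 * (n:ℝ) - 1) * ((a + 1) * (b + 1)) ≤ 2 * ((a + n) * (b + n)) := by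
    rcases hab with h | ⟨h1, h2'⟩
    · nlinarith [mul_nonneg (by linarith : (0:ℝ) ≤ (n:ℝ) - 2)
        (by nlinarith : (0:ℝ) ≤ (n:ℝ) + 1 - a * b)]
    · nlinarith [sq_nonneg (2 * (n:ℝ) - (a * b + 1))]
  rw [norm_bern' ha hb c n hn1]
  have h21 : (0:ℝ) < 2 * (n:ℝ) - 1 := by linarith
  have hfac2 : (a + 1) * (b + 1) / ((a + n) * (b + n)) ≤ 2 / (2 * (n:ℝ) - 1) := by
    rw [div_le_div_iff₀ hp h21]; nlinarith
  have hc := norm_nonneg (c n)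
  calc ((n:ℝ) * (2 * n - 1)) * ((a + 1) * (b + 1) / ((a + n) * (b + n)) * ‖c n‖)
      ≤ ((n:ℝ) * (2 * n - 1)) * (2 / (2 * (n:ℝ) - 1) * ‖c n‖) := by
        apply mul_le_mul_of_nonneg_left
          (mul_le_mul_of_nonneg_right hfac2 hc) (by nlinarith)
    _ = 2 * n * ‖c n‖ := by rw [div_mul_eq_mul_div, mul_div_assoc', div_eq_iff h21.ne']; ring

lemma hasDerivAt_ps (c : ℕ → ℂ) (S1 : Summable fun n : ℕ => (n:ℝ) * ‖c n‖)
    {z : ℂ} (hz : z ∈ ball (0:ℂ) 1) :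
    HasDerivAt (fun w => ∑' (n : ℕ), c n * w ^ n) (∑' (n : ℕ), (n:ℂ) * c n * z ^ (n - 1)) z := by
  refine hasDerivAt_tsum_of_isPreconnected S1 isOpen_ball
    (convex_ball (0:ℂ) 1).isPreconnected
    (g := fun (n : ℕ) (w : ℂ) => c n * w ^ n) (g' := fun (n : ℕ) (w : ℂ) => (n:ℂ) * c n * w ^ (n - 1))
    ?_ ?_ (mem_ball_self one_pos) ?_ hz
  · intro n y _
    have := (hasDerivAt_pow n y).const_mul (c n)
    beta_reduce
    exact this.congr_deriv (by ring)
  · intro n y hy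
    have hy1 : ‖y‖ ≤ 1 := le_of_lt (by simpa using hy)
    calc ‖(n:ℂ) * c n * y ^ (n-1)‖ = (n:ℝ) * ‖c n‖ * ‖y‖^(n-1) := by
          simp [norm_mul, norm_pow]
      _ ≤ (n:ℝ) * ‖c n‖ * 1 :=
          mul_le_mul_of_nonneg_left (pow_le_one₀ (norm_nonneg _) hy1) (by positivity)
      _ = (n:ℝ) * ‖c n‖ := mul_one _
  · apply summable_of_ne_finset_zero (s := {0})
    intro n hn
    simp at hn
    simp [zero_pow hn]

lemma hasDerivAt_ps2 (c : ℕ → ℂ)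
    (S2 : Summable fun n : ℕ => (n:ℝ) * ((n - 1 : ℕ):ℝ) * ‖c n‖)
    {z : ℂ} (hz : z ∈ ball (0:ℂ) 1) :
    HasDerivAt (fun w => ∑' (n : ℕ), (n:ℂ) * c n * w ^ (n - 1))
      (∑' (n : ℕ), (n:ℂ) * ((n - 1 : ℕ):ℂ) * c n * z ^ (n - 1 - 1)) z := by
  refine hasDerivAt_tsum_of_isPreconnected S2 isOpen_ball
    (convex_ball (0:ℂ) 1).isPreconnected
    (g := fun (n : ℕ) (w : ℂ) => (n:ℂ) * c n * w ^ (n - 1))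
    (g' := fun (n : ℕ) (w : ℂ) => (n:ℂ) * ((n - 1 : ℕ):ℂ) * c n * w ^ (n - 1 - 1))
    ?_ ?_ (mem_ball_self one_pos) ?_ hz
  · intro n y _
    have := (hasDerivAt_pow (n - 1) y).const_mul ((n:ℂ) * c n)
    beta_reduce
    exact this.congr_deriv (by ring)
  · intro n y hy
    have hy1 : ‖y‖ ≤ 1 := le_of_lt (by simpa using hy)
    calc ‖(n:ℂ) * ((n - 1 : ℕ):ℂ) * c n * y ^ (n-1-1)‖
        = (n:ℝ) * ((n - 1 : ℕ):ℝ) * ‖c n‖ * ‖y‖^(n-1-1) := by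
          simp [norm_mul, norm_pow, mul_assoc]
      _ ≤ (n:ℝ) * ((n - 1 : ℕ):ℝ) * ‖c n‖ * 1 :=
          mul_le_mul_of_nonneg_left (pow_le_one₀ (norm_nonneg _) hy1) (by positivity)
      _ = _ := mul_one _
  · apply summable_of_ne_finset_zero (s := {0, 1})
    intro n hn
    simp at hn
    have : n - 1 ≠ 0 := by omega
    simp [zero_pow this]

lemma tsum_split2C (t : ℕ → ℂ) (u : ℕ → ℝ) (hu : Summable u) (hb : ∀ n, ‖t n‖ ≤ u n) :
    (∑' n, t n) = t 0 + t 1 + ∑' n, t (n + 2) ∧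
      ‖∑' n, t (n + 2)‖ ≤ ∑' n, u (n + 2) := by
  have ht : Summable t :=
    Summable.of_norm (hu.of_nonneg_of_le (fun n => norm_nonneg _) hb)
  constructor
  · rw [Summable.tsum_eq_zero_add ht, Summable.tsum_eq_zero_add ((summable_nat_add_iff 1).mpr ht)]
    simp [add_assoc]
  · exact tsum_of_norm_bounded ((summable_nat_add_iff 2).mpr hu).hasSum (fun n => hb (n + 2))


lemma term_bound1 (c : ℕ → ℂ) {z : ℂ} (hz1 : ‖z‖ ≤ 1) (n : ℕ) :
    ‖(n:ℂ) * c n * z ^ (n - 1)‖ ≤ (n:ℝ) * ‖c n‖ := by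
  calc ‖(n:ℂ) * c n * z ^ (n-1)‖ = (n:ℝ) * ‖c n‖ * ‖z‖^(n-1) := by
        simp [norm_mul, norm_pow]
    _ ≤ (n:ℝ) * ‖c n‖ * 1 :=
        mul_le_mul_of_nonneg_left (pow_le_one₀ (norm_nonneg _) hz1) (by positivity)
    _ = (n:ℝ) * ‖c n‖ := mul_one _

lemma term_bound2 (c : ℕ → ℂ) {z : ℂ} (hz1 : ‖z‖ ≤ 1) (n : ℕ) :
    ‖(n:ℂ) * ((n - 1 : ℕ):ℂ) * c n * z ^ (n - 1 - 1)‖ ≤ (n:ℝ) * ((n - 1 : ℕ):ℝ) * ‖c n‖ := by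
  calc ‖(n:ℂ) * ((n - 1 : ℕ):ℂ) * c n * z ^ (n-1-1)‖
      = (n:ℝ) * ((n - 1 : ℕ):ℝ) * ‖c n‖ * ‖z‖^(n-1-1) := by
        simp [norm_mul, norm_pow, mul_assoc]
    _ ≤ (n:ℝ) * ((n - 1 : ℕ):ℝ) * ‖c n‖ * 1 :=
        mul_le_mul_of_nonneg_left (pow_le_one₀ (norm_nonneg _) hz1) (by positivity)
    _ = _ := mul_one _

lemma harith_key : ∀ r h1 g1 x y nd pd : ℝ, 0 < r → r ≤ 2 → 0 ≤ x → 0 ≤ y →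
    g1 + 2 * (x + y) ≤ h1 → nd ≤ r ^ 2 * x + 2 * (r * g1) + r ^ 2 * y →
    2 * (r * h1) - r ^ 2 * x - r ^ 2 * y ≤ pd → nd ≤ pd := by
  intro r h1 g1 x y nd pd hr hr2 hx hy hp hnd hpd
  nlinarith [mul_nonneg (mul_nonneg hr.le (by linarith : (0:ℝ) ≤ 2 - r))
      (by linarith : (0:ℝ) ≤ x + y),
    mul_nonneg hr.le (by linarith : (0:ℝ) ≤ h1 - g1 - 2 * (x + y))]

end BernAux

open BernAux

/-- If the coefficients of `f = h + conj g` satisfy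
`∑_{n≥2} n|aₙ| + ∑_{n≥1} n|bₙ| ≤ 1/2` and `a > -1`, `b > -1` satisfy (i) `ab ≤ 3` or
(ii) `ab > 3` and `a²b² - 4ab - 2(a+b) ≤ 1`, then the Bernardi-transformed coefficients
`Aₙ, Bₙ` satisfy `∑_{n≥2} n(2n-1)(|Aₙ|+|Bₙ|) ≤ 1 - |B₁|`; consequently
`F = ∑ Aₙ zⁿ + conj (∑ Bₙ zⁿ)` is uniformly convex in `𝔻`. -/
theorem bernardi_uniformly_convex (a b : ℝ) (ha : -1 < a) (hb : -1 < b)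
    (hab : a * b ≤ 3 ∨ (3 < a * b ∧ a ^ 2 * b ^ 2 - 4 * (a * b) - 2 * (a + b) ≤ 1))
    (ca cb : ℕ → ℂ) (hca0 : ca 0 = 0) (hca1 : ca 1 = 1) (hcb0 : cb 0 = 0)
    (hsa : Summable (fun n : ℕ => ((n + 2 : ℝ)) * ‖ca (n + 2)‖))
    (hsb : Summable (fun n : ℕ => ((n + 1 : ℝ)) * ‖cb (n + 1)‖))
    (hcoef : (∑' n : ℕ, ((n + 2 : ℝ)) * ‖ca (n + 2)‖)
        + (∑' n : ℕ, ((n + 1 : ℝ)) * ‖cb (n + 1)‖) ≤ 1 / 2) :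
    Summable (fun n : ℕ => (((n + 2) * (2 * (n + 2) - 1) : ℝ))
        * (‖bernCoeff a b ca (n + 2)‖ + ‖bernCoeff a b cb (n + 2)‖)) ∧
    (∑' n : ℕ, (((n + 2) * (2 * (n + 2) - 1) : ℝ))
        * (‖bernCoeff a b ca (n + 2)‖ + ‖bernCoeff a b cb (n + 2)‖))
      ≤ 1 - ‖bernCoeff a b cb 1‖ ∧
    UniformlyConvexOnDisk (fun z => ∑' n : ℕ, bernCoeff a b ca n * z ^ n)
      (fun z => ∑' n : ℕ, bernCoeff a b cb n * z ^ n) := by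
  classical
  have ha1 : (0:ℝ) < a + 1 := by linarith
  have hb1 : (0:ℝ) < b + 1 := by linarith
  set A : ℕ → ℂ := bernCoeff a b ca with hAdef
  set B : ℕ → ℂ := bernCoeff a b cb with hBdef
  have hA0 : A 0 = 0 := by simp [hAdef, bernCoeff, hca0]
  have hB0 : B 0 = 0 := by simp [hBdef, bernCoeff, hcb0]
  have hA1 : A 1 = 1 := by
    simp [hAdef, bernCoeff, hca1, div_self (ne_of_gt (mul_pos ha1 hb1))]
  have hB1eq : B 1 = cb 1 := by
    simp [hBdef, bernCoeff, div_self (ne_of_gt (mul_pos ha1 hb1))]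
  -- shifted summability for cb
  have hsb2 : Summable (fun n : ℕ => ((n:ℝ) + 2) * ‖cb (n + 2)‖) := by
    have h1 := (summable_nat_add_iff 1).mpr hsb
    exact h1.congr (fun n => by push_cast [show n + 1 + 1 = n + 2 from rfl]; ring)
  -- termwise key bounds
  have hkeyA : ∀ n : ℕ, (((n:ℝ) + 2) * (2 * ((n:ℝ) + 2) - 1)) * ‖A (n+2)‖
      ≤ 2 * ((n:ℝ) + 2) * ‖ca (n+2)‖ := by
    intro n
    have h := key_coeff ha hb hab ca (n+2) (by omega)
    rw [hAdef]; push_cast at h ⊢; linarith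
  have hkeyB : ∀ n : ℕ, (((n:ℝ) + 2) * (2 * ((n:ℝ) + 2) - 1)) * ‖B (n+2)‖
      ≤ 2 * ((n:ℝ) + 2) * ‖cb (n+2)‖ := by
    intro n
    have h := key_coeff ha hb hab cb (n+2) (by omega)
    rw [hBdef]; push_cast at h ⊢; linarith
  -- summability of the majorant
  have hmaj : Summable (fun n : ℕ => 2 * (((n:ℝ) + 2) * ‖ca (n+2)‖)
      + 2 * (((n:ℝ) + 2) * ‖cb (n+2)‖)) := (hsa.mul_left 2).add (hsb2.mul_left 2)
  have part1 : Summable (fun n : ℕ => (((n + 2) * (2 * (n + 2) - 1) : ℝ))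
      * (‖A (n + 2)‖ + ‖B (n + 2)‖)) := by
    refine Summable.of_nonneg_of_le (fun n => ?_) (fun n => ?_) hmaj
    · have hn : (0:ℝ) ≤ (n:ℝ) := Nat.cast_nonneg n
      have hc : (0:ℝ) ≤ ((n:ℝ) + 2) * (2 * ((n:ℝ) + 2) - 1) := by nlinarith [sq_nonneg (n:ℝ)]
      push_cast
      exact mul_nonneg hc (add_nonneg (norm_nonneg _) (norm_nonneg _))
    · have h1 := hkeyA n; have h2 := hkeyB n
      push_cast
      nlinarith
  -- the sum bound
  have hSb_split : (∑' n : ℕ, ((n:ℝ) + 1) * ‖cb (n + 1)‖)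
      = ‖cb 1‖ + ∑' n : ℕ, ((n:ℝ) + 2) * ‖cb (n + 2)‖ := by
    rw [Summable.tsum_eq_zero_add hsb]
    push_cast
    congr 1
    · norm_num
    · exact tsum_congr (fun n => by push_cast [show n + 1 + 1 = n + 2 from rfl]; ring)
  have part2 : (∑' n : ℕ, (((n + 2) * (2 * (n + 2) - 1) : ℝ))
      * (‖A (n + 2)‖ + ‖B (n + 2)‖)) ≤ 1 - ‖B 1‖ := by
    have hle := Summable.tsum_le_tsum (f := fun n : ℕ => (((n + 2) * (2 * (n + 2) - 1) : ℝ))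
        * (‖A (n + 2)‖ + ‖B (n + 2)‖)) (fun n => by
          have h1 := hkeyA n; have h2 := hkeyB n; push_cast; nlinarith) part1 hmaj
    have hsplit : (∑' n : ℕ, (2 * (((n:ℝ) + 2) * ‖ca (n+2)‖)
        + 2 * (((n:ℝ) + 2) * ‖cb (n+2)‖)))
        = 2 * (∑' n : ℕ, ((n:ℝ) + 2) * ‖ca (n+2)‖)
          + 2 * (∑' n : ℕ, ((n:ℝ) + 2) * ‖cb (n+2)‖) := by
      rw [Summable.tsum_add (hsa.mul_left 2) (hsb2.mul_left 2), tsum_mul_left, tsum_mul_left]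
    rw [hsplit] at hle
    have hcb1 : (0:ℝ) ≤ ‖cb 1‖ := norm_nonneg _
    have hca' : (∑' n : ℕ, ((n:ℝ) + 2) * ‖ca (n+2)‖)
        = ∑' n : ℕ, ((n + 2 : ℝ)) * ‖ca (n + 2)‖ := rfl
    rw [hB1eq]
    linarith [hcoef, hSb_split ▸ hcoef]
  refine ⟨part1, part2, ?_⟩
  -- summability facts for the transformed coefficients
  have hAle : ∀ n : ℕ, ‖A (n+2)‖ ≤ ‖ca (n+2)‖ := fun n => by
    rw [hAdef]; exact norm_bern_le ha hb ca (n+2) (by omega)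
  have hBle : ∀ n : ℕ, ‖B (n+2)‖ ≤ ‖cb (n+2)‖ := fun n => by
    rw [hBdef]; exact norm_bern_le ha hb cb (n+2) (by omega)
  have sA2 : Summable (fun n : ℕ => ((n:ℝ) + 2) * ‖A (n+2)‖) := by
    refine hsa.of_nonneg_of_le (fun n => by positivity) (fun n => ?_)
    exact mul_le_mul_of_nonneg_left (hAle n) (by positivity)
  have sB2 : Summable (fun n : ℕ => ((n:ℝ) + 2) * ‖B (n+2)‖) := by
    refine hsb2.of_nonneg_of_le (fun n => by positivity) (fun n => ?_)
    exact mul_le_mul_of_nonneg_left (hBle n) (by positivity)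
  have sTa : Summable (fun n : ℕ => ((n:ℝ) + 2) * ((n:ℝ) + 1) * ‖A (n+2)‖) := by
    refine (hsa.mul_left 2).of_nonneg_of_le (fun n => by positivity) (fun n => ?_)
    have h1 := hkeyA n
    have h2 : (0:ℝ) ≤ ‖A (n+2)‖ := norm_nonneg _
    have hn : (0:ℝ) ≤ (n:ℝ) := Nat.cast_nonneg n
    have h3 := mul_le_mul_of_nonneg_right
      (show ((n:ℝ) + 2) * ((n:ℝ) + 1) ≤ ((n:ℝ) + 2) * (2 * ((n:ℝ) + 2) - 1) by nlinarith) h2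
    linarith
  have sTb : Summable (fun n : ℕ => ((n:ℝ) + 2) * ((n:ℝ) + 1) * ‖B (n+2)‖) := by
    refine (hsb2.mul_left 2).of_nonneg_of_le (fun n => by positivity) (fun n => ?_)
    have h1 := hkeyB n
    have h2 : (0:ℝ) ≤ ‖B (n+2)‖ := norm_nonneg _
    have hn : (0:ℝ) ≤ (n:ℝ) := Nat.cast_nonneg n
    have h3 := mul_le_mul_of_nonneg_right
      (show ((n:ℝ) + 2) * ((n:ℝ) + 1) ≤ ((n:ℝ) + 2) * (2 * ((n:ℝ) + 2) - 1) by nlinarith) h2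
    linarith
  set Sa := ∑' n : ℕ, ((n:ℝ) + 2) * ‖A (n+2)‖ with hSa
  set Sb := ∑' n : ℕ, ((n:ℝ) + 2) * ‖B (n+2)‖ with hSbdef
  set Ta := ∑' n : ℕ, ((n:ℝ) + 2) * ((n:ℝ) + 1) * ‖A (n+2)‖ with hTa
  set Tb := ∑' n : ℕ, ((n:ℝ) + 2) * ((n:ℝ) + 1) * ‖B (n+2)‖ with hTb
  -- global bound
  have hglob : Sa + Sb + 2 * Ta + 2 * Tb ≤ 1 - ‖B 1‖ := by
    have hsplit : (∑' n : ℕ, (((n + 2) * (2 * (n + 2) - 1) : ℝ))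
        * (‖A (n + 2)‖ + ‖B (n + 2)‖))
        = Sa + (Sb + (2 * Ta + 2 * Tb)) := by
      rw [hSa, hSbdef, hTa, hTb, ← tsum_mul_left, ← tsum_mul_left,
        ← Summable.tsum_add (sTa.mul_left 2) (sTb.mul_left 2),
        ← Summable.tsum_add sB2 (((sTa.mul_left 2).add (sTb.mul_left 2))),
        ← Summable.tsum_add sA2 (sB2.add ((sTa.mul_left 2).add (sTb.mul_left 2)))]
      exact tsum_congr (fun n => by push_cast; ring)
    rw [hsplit] at part2
    linarith
  -- full-range summability
  have sA1full : Summable (fun n : ℕ => (n:ℝ) * ‖A n‖) :=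
    (summable_nat_add_iff 2).mp (sA2.congr (fun n => by push_cast; ring))
  have sB1full : Summable (fun n : ℕ => (n:ℝ) * ‖B n‖) :=
    (summable_nat_add_iff 2).mp (sB2.congr (fun n => by push_cast; ring))
  have sA2full : Summable (fun n : ℕ => (n:ℝ) * ((n - 1 : ℕ):ℝ) * ‖A n‖) :=
    (summable_nat_add_iff 2).mp (sTa.congr (fun n => by
      push_cast [show n + 2 - 1 = n + 1 from rfl]; ring))
  have sB2full : Summable (fun n : ℕ => (n:ℝ) * ((n - 1 : ℕ):ℝ) * ‖B n‖) :=
    (summable_nat_add_iff 2).mp (sTb.congr (fun n => by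
      push_cast [show n + 2 - 1 = n + 1 from rfl]; ring))
  -- nonnegativity of the sums
  have hSa0 : 0 ≤ Sa := tsum_nonneg (fun n => by positivity)
  have hSb0 : 0 ≤ Sb := tsum_nonneg (fun n => by positivity)
  have hTa0 : 0 ≤ Ta := tsum_nonneg (fun n => by positivity)
  have hTb0 : 0 ≤ Tb := tsum_nonneg (fun n => by positivity)
  intro z hz ζ hζ hne
  have hz1 : ‖z‖ < 1 := by simpa using hz
  have hζ1 : ‖ζ‖ < 1 := by simpa using hζ
  have hz1' : ‖z‖ ≤ 1 := hz1.le
  -- first derivatives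
  have hdh : deriv (fun w => ∑' (n : ℕ), A n * w ^ n) z
      = ∑' (n : ℕ), (n:ℂ) * A n * z ^ (n - 1) := (hasDerivAt_ps A sA1full hz).deriv
  have hdg : deriv (fun w => ∑' (n : ℕ), B n * w ^ n) z
      = ∑' (n : ℕ), (n:ℂ) * B n * z ^ (n - 1) := (hasDerivAt_ps B sB1full hz).deriv
  -- second derivatives
  have hEqA : Set.EqOn (deriv (fun w => ∑' (n : ℕ), A n * w ^ n))
      (fun w => ∑' (n : ℕ), (n:ℂ) * A n * w ^ (n - 1)) (ball (0:ℂ) 1) :=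
    fun w hw => (hasDerivAt_ps A sA1full hw).deriv
  have hEqB : Set.EqOn (deriv (fun w => ∑' (n : ℕ), B n * w ^ n))
      (fun w => ∑' (n : ℕ), (n:ℂ) * B n * w ^ (n - 1)) (ball (0:ℂ) 1) :=
    fun w hw => (hasDerivAt_ps B sB1full hw).deriv
  have hddh : deriv (deriv (fun w => ∑' (n : ℕ), A n * w ^ n)) z
      = ∑' (n : ℕ), (n:ℂ) * ((n - 1 : ℕ):ℂ) * A n * z ^ (n - 1 - 1) := by
    rw [Filter.EventuallyEq.deriv_eq (hEqA.eventuallyEq_of_mem (isOpen_ball.mem_nhds hz))]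
    exact (hasDerivAt_ps2 A sA2full hz).deriv
  have hddg : deriv (deriv (fun w => ∑' (n : ℕ), B n * w ^ n)) z
      = ∑' (n : ℕ), (n:ℂ) * ((n - 1 : ℕ):ℂ) * B n * z ^ (n - 1 - 1) := by
    rw [Filter.EventuallyEq.deriv_eq (hEqB.eventuallyEq_of_mem (isOpen_ball.mem_nhds hz))]
    exact (hasDerivAt_ps2 B sB2full hz).deriv
  set H1 := ∑' (n : ℕ), (n:ℂ) * A n * z ^ (n - 1) with hH1def
  set G1 := ∑' (n : ℕ), (n:ℂ) * B n * z ^ (n - 1) with hG1def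
  set H2 := ∑' (n : ℕ), (n:ℂ) * ((n - 1 : ℕ):ℂ) * A n * z ^ (n - 1 - 1) with hH2def
  set G2 := ∑' (n : ℕ), (n:ℂ) * ((n - 1 : ℕ):ℂ) * B n * z ^ (n - 1 - 1) with hG2def
  -- bounds on the derivative values
  obtain ⟨hsplH1, hRH1⟩ := tsum_split2C (fun n : ℕ => (n:ℂ) * A n * z ^ (n - 1))
    (fun n : ℕ => (n:ℝ) * ‖A n‖) sA1full (term_bound1 A hz1')
  obtain ⟨hsplG1, hRG1⟩ := tsum_split2C (fun n : ℕ => (n:ℂ) * B n * z ^ (n - 1))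
    (fun n : ℕ => (n:ℝ) * ‖B n‖) sB1full (term_bound1 B hz1')
  obtain ⟨hsplH2, hRH2⟩ := tsum_split2C
    (fun n : ℕ => (n:ℂ) * ((n - 1 : ℕ):ℂ) * A n * z ^ (n - 1 - 1))
    (fun n : ℕ => (n:ℝ) * ((n - 1 : ℕ):ℝ) * ‖A n‖) sA2full (term_bound2 A hz1')
  obtain ⟨hsplG2, hRG2⟩ := tsum_split2C
    (fun n : ℕ => (n:ℂ) * ((n - 1 : ℕ):ℂ) * B n * z ^ (n - 1 - 1))
    (fun n : ℕ => (n:ℝ) * ((n - 1 : ℕ):ℝ) * ‖B n‖) sB2full (term_bound2 B hz1')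
  -- identify the tail sums of the real majorants
  have hSa' : (∑' n : ℕ, ((n + 2 : ℕ):ℝ) * ‖A (n + 2)‖) = Sa :=
    tsum_congr (fun n => by push_cast; ring)
  have hSb' : (∑' n : ℕ, ((n + 2 : ℕ):ℝ) * ‖B (n + 2)‖) = Sb :=
    tsum_congr (fun n => by push_cast; ring)
  have hTa' : (∑' n : ℕ, ((n + 2 : ℕ):ℝ) * ((n + 2 - 1 : ℕ):ℝ) * ‖A (n + 2)‖) = Ta :=
    tsum_congr (fun n => by push_cast [show n + 2 - 1 = n + 1 from rfl]; ring)
  have hTb' : (∑' n : ℕ, ((n + 2 : ℕ):ℝ) * ((n + 2 - 1 : ℕ):ℝ) * ‖B (n + 2)‖) = Tb :=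
    tsum_congr (fun n => by push_cast [show n + 2 - 1 = n + 1 from rfl]; ring)
  rw [hSa'] at hRH1
  rw [hSb'] at hRG1
  rw [hTa'] at hRH2
  rw [hTb'] at hRG2
  -- lower bound for H1
  have hH1low : 1 - Sa ≤ ‖H1‖ := by
    have hdecomp : H1 = 1 + ∑' n : ℕ, ((n + 2 : ℕ):ℂ) * A (n + 2) * z ^ (n + 2 - 1) := by
      rw [hH1def, hsplH1, hA0, hA1]
      push_cast
      ring
    rw [hdecomp]
    have h1 := norm_sub_le ((1:ℂ) + ∑' n : ℕ, ((n + 2 : ℕ):ℂ) * A (n + 2) * z ^ (n + 2 - 1))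
      (∑' n : ℕ, ((n + 2 : ℕ):ℂ) * A (n + 2) * z ^ (n + 2 - 1))
    simp only [add_sub_cancel_right, norm_one] at h1
    linarith
  -- upper bound for G1
  have hG1up : ‖G1‖ ≤ ‖B 1‖ + Sb := by
    have hdecomp : G1 = B 1 + ∑' n : ℕ, ((n + 2 : ℕ):ℂ) * B (n + 2) * z ^ (n + 2 - 1) := by
      rw [hG1def, hsplG1, hB0]
      push_cast
      ring
    rw [hdecomp]
    exact le_trans (norm_add_le _ _) (by linarith)
  -- upper bounds for the second derivatives
  have hH2up : ‖H2‖ ≤ Ta := by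
    have hdecomp : H2 = ∑' n : ℕ, ((n + 2 : ℕ):ℂ) * ((n + 2 - 1 : ℕ):ℂ) * A (n + 2)
        * z ^ (n + 2 - 1 - 1) := by
      rw [hH2def, hsplH2]
      push_cast
      ring
    rw [hdecomp]; exact hRH2
  have hG2up : ‖G2‖ ≤ Tb := by
    have hdecomp : G2 = ∑' n : ℕ, ((n + 2 : ℕ):ℂ) * ((n + 2 - 1 : ℕ):ℂ) * B (n + 2)
        * z ^ (n + 2 - 1 - 1) := by
      rw [hG2def, hsplG2]
      push_cast
      ring
    rw [hdecomp]; exact hRG2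
  -- rewrite the goal in terms of H1, H2, G1, G2
  rw [hdh, hdg, hddh, hddg]
  set w := z - ζ with hwdef
  set N := w * H1 + w ^ 2 * H2 + conj (w * G1) + conj (w ^ 2 * G2) with hNdef
  set D := w * H1 - conj (w * G1) with hDdef
  show 0 ≤ (N / D).re
  by_cases hD : D = 0
  · rw [hD, div_zero]
    simp
  -- main norm inequality
  have hw0 : (0:ℝ) < ‖w‖ := by
    rw [norm_pos_iff, hwdef]
    exact sub_ne_zero.mpr hne
  have hw2 : ‖w‖ ≤ 2 := by
    have := norm_sub_le z ζ
    rw [hwdef]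
    linarith
  have hptw : ‖G1‖ + 2 * (‖H2‖ + ‖G2‖) ≤ ‖H1‖ := by linarith
  have e1 : N - D = w ^ 2 * H2 + 2 * conj (w * G1) + conj (w ^ 2 * G2) := by
    rw [hNdef, hDdef]; ring
  have e2 : 2 * (w * H1) = (N + D) - w ^ 2 * H2 - conj (w ^ 2 * G2) := by
    rw [hNdef, hDdef]; ring
  have hconj1 : ‖conj (w * G1)‖ = ‖w‖ * ‖G1‖ := by simp
  have hconj2 : ‖conj (w ^ 2 * G2)‖ = ‖w‖ ^ 2 * ‖G2‖ := by simp
  have b1 : ‖N - D‖ ≤ ‖w‖ ^ 2 * ‖H2‖ + 2 * (‖w‖ * ‖G1‖) + ‖w‖ ^ 2 * ‖G2‖ := by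
    rw [e1]
    calc ‖w ^ 2 * H2 + 2 * conj (w * G1) + conj (w ^ 2 * G2)‖
        ≤ ‖w ^ 2 * H2 + 2 * conj (w * G1)‖ + ‖conj (w ^ 2 * G2)‖ := norm_add_le _ _
      _ ≤ ‖w ^ 2 * H2‖ + ‖2 * conj (w * G1)‖ + ‖conj (w ^ 2 * G2)‖ :=
          add_le_add_left (norm_add_le _ _) _
      _ = ‖w‖ ^ 2 * ‖H2‖ + 2 * (‖w‖ * ‖G1‖) + ‖w‖ ^ 2 * ‖G2‖ := by
          rw [norm_mul, norm_mul, norm_pow, hconj1, hconj2]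
          norm_num
  have b2 : 2 * (‖w‖ * ‖H1‖) - ‖w‖ ^ 2 * ‖H2‖ - ‖w‖ ^ 2 * ‖G2‖ ≤ ‖N + D‖ := by
    have h3 : ‖2 * (w * H1)‖ ≤ ‖N + D‖ + ‖w ^ 2 * H2‖ + ‖conj (w ^ 2 * G2)‖ := by
      rw [e2]
      exact le_trans (norm_sub_le _ _) (add_le_add_left (norm_sub_le _ _) _)
    simp only [norm_mul, norm_pow, Complex.norm_ofNat] at h3
    rw [hconj2] at h3
    linarith
  have key : ‖N - D‖ ≤ ‖N + D‖ :=
    harith_key ‖w‖ ‖H1‖ ‖G1‖ ‖H2‖ ‖G2‖ ‖N - D‖ ‖N + D‖ hw0 hw2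
      (norm_nonneg _) (norm_nonneg _) hptw b1 b2
  -- conclude positivity of the real part
  have hre : 0 ≤ (N * conj D).re := by
    have hid1 : Complex.normSq (N + D)
        = Complex.normSq N + Complex.normSq D + 2 * (N * conj D).re :=
      Complex.normSq_add N D
    have hid2 : Complex.normSq (N - D)
        = Complex.normSq N + Complex.normSq D - 2 * (N * conj D).re := by
      rw [sub_eq_add_neg, Complex.normSq_add]
      simp [Complex.normSq_neg]
      ring
    have hns : Complex.normSq (N - D) ≤ Complex.normSq (N + D) := by
      rw [Complex.normSq_eq_norm_sq, Complex.normSq_eq_norm_sq]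
      exact pow_le_pow_left₀ (norm_nonneg _) key 2
    linarith
  have hform : (N / D).re = (N * conj D).re * (Complex.normSq D)⁻¹ := by
    rw [div_eq_mul_inv, Complex.inv_def, ← mul_assoc]
    simp [Complex.mul_re]
  rw [hform]
  exact mul_nonneg hre (inv_nonneg.mpr (Complex.normSq_nonneg D))
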